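/- For 0 < r < R and constants C, D with C − D√(1 − r²/R²) ≠ 0, the functions ν(r) = 2·log|C − D√(1 − r²/R²)| and λ(r) = −log(1 − r²/R²) satisfy the vanishing complexity equation ν'(r)·(r·λ'(r) − r·ν'(r) + 2) − 2r·ν''(r) = 0. -/

import Mathlib

open Real Set

lemma key_alg (r k S w D : ℝ) (hk : k ≠ 0) (hS : S ≠ 0) (hw : w ≠ 0)
    (hS2 : S ^ 2 = 1 - r ^ 2 / k) :
    (2 * (-(D * (-r / (k * S))) / w)) *
        (r * (2 * r / (k * (1 - r ^ 2 / k))) - r * (2 * (-(D * (-r / (k * S))) / w)) + 2)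
      - 2 * r * ((2 * D * (k * S * w) -
          2 * D * r * (k * (-r / (k * S)) * w + k * S * (-(D * (-r / (k * S)))))) /
            (k * S * w) ^ 2) = 0 := by
  have hS2' : S ^ 2 ≠ 0 := pow_ne_zero 2 hS
  have hu : (1 - r ^ 2 / k) ≠ 0 := by rw [← hS2]; exact hS2'
  rw [← hS2]
  field_simp
  ring

theorem schwarzschild_interior_vanishing_complexity
    (R C D : ℝ) (hR : 0 < R) :
    ∀ r : ℝ, 0 < r → r < R →
      C - D * Real.sqrt (1 - r ^ 2 / R ^ 2) ≠ 0 →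
      (fun (f g : ℝ → ℝ) =>
        deriv f r * (r * deriv g r - r * deriv f r + 2)
          - 2 * r * deriv (deriv f) r = 0)
      (fun r => 2 * Real.log |C - D * Real.sqrt (1 - r ^ 2 / R ^ 2)|)
      (fun r => -Real.log (1 - r ^ 2 / R ^ 2)) := by
  intro r hr hrR hW
  simp only [Real.log_abs]
  have hR0 : R ≠ 0 := ne_of_gt hR
  have hR2 : (0:ℝ) < R ^ 2 := by positivity
  -- positivity of u on (-R, R)
  have hu : ∀ x : ℝ, -R < x → x < R → 0 < 1 - x ^ 2 / R ^ 2 := by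
    intro x h1 h2
    have hx : x ^ 2 < R ^ 2 := by nlinarith
    rw [sub_pos, div_lt_one hR2]; exact hx
  set s : ℝ → ℝ := fun x => Real.sqrt (1 - x ^ 2 / R ^ 2) with hs_def
  have hspos : ∀ x : ℝ, -R < x → x < R → 0 < s x := by
    intro x h1 h2; exact Real.sqrt_pos.mpr (hu x h1 h2)
  -- derivative of s
  have hds : ∀ x : ℝ, -R < x → x < R →
      HasDerivAt s (-x / (R ^ 2 * s x)) x := by
    intro x h1 h2
    have hux := hu x h1 h2
    have hsx := hspos x h1 h2
    have h1' : HasDerivAt (fun y : ℝ => 1 - y ^ 2 / R ^ 2) (-(2 * x) / R ^ 2) x := by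
      have hp : HasDerivAt (fun y : ℝ => y ^ 2) (2 * x) x := by
        simpa using (hasDerivAt_pow 2 x)
      have := (hp.div_const (R ^ 2)).const_sub 1
      simpa [neg_div] using this
    have := h1'.sqrt (ne_of_gt hux)
    convert this using 1
    rw [hs_def]
    field_simp
  set W : ℝ → ℝ := fun x => C - D * s x with hW_def
  have hdW : ∀ x : ℝ, -R < x → x < R →
      HasDerivAt W (-(D * (-x / (R ^ 2 * s x)))) x := by
    intro x h1 h2
    exact ((hds x h1 h2).const_mul D).const_sub C
  -- f and its first derivative
  set f : ℝ → ℝ := fun x => 2 * Real.log (W x) with hf_def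
  have hdf : ∀ x : ℝ, -R < x → x < R → W x ≠ 0 →
      HasDerivAt f (2 * (-(D * (-x / (R ^ 2 * s x))) / W x)) x := by
    intro x h1 h2 hWx
    exact ((hdW x h1 h2).log hWx).const_mul 2
  -- the open neighborhood
  have hWcont : Continuous W := by
    apply Continuous.sub continuous_const
    apply Continuous.mul continuous_const
    exact Real.continuous_sqrt.comp (by continuity)
  have hVopen : IsOpen (Ioo (-R) R ∩ {x | W x ≠ 0}) :=
    isOpen_Ioo.inter (isOpen_ne_fun hWcont continuous_const)
  have hrV : r ∈ Ioo (-R) R ∩ {x | W x ≠ 0} :=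
    ⟨⟨by linarith, hrR⟩, hW⟩
  have hVnhds : Ioo (-R) R ∩ {x | W x ≠ 0} ∈ nhds r := hVopen.mem_nhds hrV
  -- eventual equality of deriv f with explicit formula
  set F : ℝ → ℝ := fun x => 2 * D * x / (R ^ 2 * s x * W x) with hF_def
  have hEq : deriv f =ᶠ[nhds r] F := by
    filter_upwards [hVnhds] with x hx
    have h1 := hx.1.1
    have h2 := hx.1.2
    have hWx := hx.2
    have hsx := hspos x h1 h2
    rw [(hdf x h1 h2 hWx).deriv, hF_def]
    field_simp
  have hWr := hW
  have hsr := hspos r (by linarith) hrR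
  have hur := hu r (by linarith) hrR
  -- second derivative of f
  have hden_ne : R ^ 2 * s r * W r ≠ 0 := by positivity
  have hdden : HasDerivAt (fun x => R ^ 2 * s x * W x)
      (R ^ 2 * (-r / (R ^ 2 * s r)) * W r + R ^ 2 * s r * (-(D * (-r / (R ^ 2 * s r))))) r :=
    (((hds r (by linarith) hrR).const_mul (R ^ 2)).mul (hdW r (by linarith) hrR))
  have hdnum : HasDerivAt (fun x : ℝ => 2 * D * x) (2 * D) r := by
    simpa using (hasDerivAt_id r).const_mul (2 * D)
  have hdF : HasDerivAt F
      ((2 * D * (R ^ 2 * s r * W r) - 2 * D * r *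
        (R ^ 2 * (-r / (R ^ 2 * s r)) * W r + R ^ 2 * s r * (-(D * (-r / (R ^ 2 * s r))))))
        / (R ^ 2 * s r * W r) ^ 2) r :=
    hdnum.div hdden hden_ne
  have hf2 : deriv (deriv f) r = (2 * D * (R ^ 2 * s r * W r) - 2 * D * r *
        (R ^ 2 * (-r / (R ^ 2 * s r)) * W r + R ^ 2 * s r * (-(D * (-r / (R ^ 2 * s r))))))
        / (R ^ 2 * s r * W r) ^ 2 := by
    rw [hEq.deriv_eq]; exact hdF.deriv
  -- derivative of g
  have hdg : HasDerivAt (fun x : ℝ => -Real.log (1 - x ^ 2 / R ^ 2))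
      (2 * r / (R ^ 2 * (1 - r ^ 2 / R ^ 2))) r := by
    have h1' : HasDerivAt (fun y : ℝ => 1 - y ^ 2 / R ^ 2) (-(2 * r) / R ^ 2) r := by
      have hp : HasDerivAt (fun y : ℝ => y ^ 2) (2 * r) r := by
        simpa using (hasDerivAt_pow 2 r)
      have := (hp.div_const (R ^ 2)).const_sub 1
      simpa [neg_div] using this
    have : HasDerivAt (fun x : ℝ => -Real.log (1 - x ^ 2 / R ^ 2)) _ r := (h1'.log (ne_of_gt hur)).neg
    convert this using 1
    have hRr : R ^ 2 - r ^ 2 ≠ 0 := by nlinarith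
    rw [neg_div, neg_div, neg_neg, div_div]
  -- put everything together
  have hf1 : deriv f r = 2 * (-(D * (-r / (R ^ 2 * s r))) / W r) :=
    (hdf r (by linarith) hrR hWr).deriv
  show deriv f r * (r * deriv (fun x : ℝ => -Real.log (1 - x ^ 2 / R ^ 2)) r
      - r * deriv f r + 2) - 2 * r * deriv (deriv f) r = 0
  rw [hf1, hf2, hdg.deriv]
  have hS2 : s r ^ 2 = 1 - r ^ 2 / R ^ 2 := Real.sq_sqrt hur.le
  exact key_alg r (R ^ 2) (s r) (W r) D (ne_of_gt hR2) (ne_of_gt hsr) hWr hS2
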